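/- (Key embedding lemma.) Let N, m, n, n', a, b be nonnegative integers with N ≥ n' ≥ n ≥ a + b, N ≥ m, and N ≥ n' + (n + 1 − a − b)·m. Let c be a 2-coloring of the Boolean lattice Q_N on ground set [N], and suppose there exists an injection i from the subsets of [n] to the subsets of [n'] satisfying S ⊆ T if and only if i(S) ⊆ i(T), such that: (1) for every S ⊆ [n] with |S| < a, the set i(S) is blue; and (2) for every S ⊆ [n] with |S| > n − b, the set i(S) ∪ ([N] \ [n']) is blue. Then Q_N contains a blue copy of Q_n or a red copy of Q_m. -/

import Mathlib

/-- A red copy of the Boolean lattice `Q m` inside the 2-colored Boolean lattice `Q N`,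
where `c S = true` means `S` is red and `c S = false` means `S` is blue. -/
def HasRedCopy (m N : ℕ) (c : Finset (Fin N) → Bool) : Prop :=
  ∃ f : Finset (Fin m) → Finset (Fin N),
    Function.Injective f ∧
    (∀ S T : Finset (Fin m), S ⊆ T ↔ f S ⊆ f T) ∧
    (∀ S : Finset (Fin m), c (f S) = true)

/-- A blue copy of the Boolean lattice `Q m` inside the 2-colored Boolean lattice `Q N`. -/
def HasBlueCopy (m N : ℕ) (c : Finset (Fin N) → Bool) : Prop :=
  ∃ f : Finset (Fin m) → Finset (Fin N),
    Function.Injective f ∧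
    (∀ S T : Finset (Fin m), S ⊆ T ↔ f S ⊆ f T) ∧
    (∀ S : Finset (Fin m), c (f S) = false)

/-- Garbage block below level `l`: indices in `[n', n' + (l-a)*m)`. -/
def gset (N n' a m l : ℕ) : Finset (Fin N) :=
  Finset.univ.filter fun x => n' ≤ (x : ℕ) ∧ (x : ℕ) < n' + (l - a) * m

/-- Fresh block for level `l`: indices in `[n' + (l-a)*m, n' + (l-a+1)*m)`. -/
def xset (N n' a m l : ℕ) : Finset (Fin N) :=
  Finset.univ.filter fun x =>
    n' + (l - a) * m ≤ (x : ℕ) ∧ (x : ℕ) < n' + (l - a + 1) * m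

lemma mem_gset {N n' a m l : ℕ} {x : Fin N} :
    x ∈ gset N n' a m l ↔ n' ≤ (x : ℕ) ∧ (x : ℕ) < n' + (l - a) * m := by
  simp [gset]

lemma mem_xset {N n' a m l : ℕ} {x : Fin N} :
    x ∈ xset N n' a m l ↔
      n' + (l - a) * m ≤ (x : ℕ) ∧ (x : ℕ) < n' + (l - a + 1) * m := by
  simp [xset]

/-- The blue embedding built from the original embedding `i` and a choice of
fresh additions `TS` for middle-layer sets. -/
def blueMap (N n n' a b m : ℕ) (i TS : Finset (Fin n) → Finset (Fin N))
    (S : Finset (Fin n)) : Finset (Fin N) :=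
  if S.card < a then i S
  else if S.card ≤ n - b then i S ∪ (gset N n' a m S.card ∪ TS S)
  else i S ∪ Finset.univ.filter fun x : Fin N => n' ≤ (x : ℕ)

/-- key embedding lemma: given an order-embedded image of Q_n inside the
first n' coordinates of Q_N whose bottom a layers are blue and whose top b layers become
blue after adding [N] \ [n'], with N ≥ n' ≥ n ≥ a + b, N ≥ m and
N ≥ n' + (n + 1 − a − b)m, the lattice Q_N contains a blue copy of Q_n or a red copy
of Q_m. -/
theorem embedding_lemma (N m n n' a b : ℕ)
    (h1 : n' ≤ N) (h2 : n ≤ n') (h3 : a + b ≤ n) (h4 : m ≤ N)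
    (h5 : N ≥ n' + (n + 1 - a - b) * m)
    (c : Finset (Fin N) → Bool)
    (i : Finset (Fin n) → Finset (Fin N))
    (hinj : Function.Injective i)
    (hord : ∀ S T : Finset (Fin n), S ⊆ T ↔ i S ⊆ i T)
    (hrange : ∀ S : Finset (Fin n), ∀ x ∈ i S, (x : ℕ) < n')
    (hbot : ∀ S : Finset (Fin n), S.card < a → c (i S) = false)
    (htop : ∀ S : Finset (Fin n), S.card > n - b →
      c (i S ∪ Finset.univ.filter fun x : Fin N => n' ≤ (x : ℕ)) = false) :
    HasBlueCopy n N c ∨ HasRedCopy m N c := by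
  classical
  by_cases hB : ∃ S : Finset (Fin n), a ≤ S.card ∧ S.card ≤ n - b ∧
      ∀ T ⊆ xset N n' a m S.card, c (i S ∪ gset N n' a m S.card ∪ T) = true
  · -- red copy
    right
    obtain ⟨S, hSa, hSb, hred⟩ := hB
    have hmul : (S.card - a + 1) * m = (S.card - a) * m + m := by ring
    have hle : S.card - a + 1 ≤ n + 1 - a - b := by omega
    have hlm : n' + (S.card - a + 1) * m ≤ N := by
      calc n' + (S.card - a + 1) * m ≤ n' + (n + 1 - a - b) * m := by
            exact Nat.add_le_add_left (Nat.mul_le_mul_right m hle) n'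
        _ ≤ N := h5
    have hemb : ∀ j : Fin m, n' + (S.card - a) * m + (j : ℕ) < N := by
      intro j
      have := j.2
      omega
    let emb : Fin m ↪ Fin N :=
      ⟨fun j => ⟨n' + (S.card - a) * m + (j : ℕ), hemb j⟩, by
        intro j k h
        have : n' + (S.card - a) * m + (j : ℕ) = n' + (S.card - a) * m + (k : ℕ) := by
          simpa [Fin.ext_iff] using h
        exact Fin.ext (by omega)⟩
    have hmapval : ∀ (T : Finset (Fin m)) (x : Fin N), x ∈ T.map emb →
        n' + (S.card - a) * m ≤ (x : ℕ) ∧ (x : ℕ) < n' + (S.card - a + 1) * m := by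
      intro T x hx
      obtain ⟨j, _, rfl⟩ := Finset.mem_map.mp hx
      have := j.2
      constructor
      · exact Nat.le_add_right _ _
      · simp only [emb, Function.Embedding.coeFn_mk]
        show n' + (S.card - a) * m + (j : ℕ) < _
        omega
    have hsubX : ∀ T : Finset (Fin m), T.map emb ⊆ xset N n' a m S.card := by
      intro T x hx
      exact mem_xset.mpr (hmapval T x hx)
    refine ⟨fun T => i S ∪ gset N n' a m S.card ∪ T.map emb, ?_, ?_, ?_⟩
    · intro T T' h
      have key : ∀ U U' : Finset (Fin m),
          i S ∪ gset N n' a m S.card ∪ U.map emb ⊆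
            i S ∪ gset N n' a m S.card ∪ U'.map emb → U ⊆ U' := by
        intro U U' hUU'
        rw [← Finset.map_subset_map (f := emb)]
        intro x hx
        have hxv := hmapval U x hx
        have := hUU' (Finset.mem_union_right _ hx)
        rcases Finset.mem_union.mp this with h' | h'
        · rcases Finset.mem_union.mp h' with h'' | h''
          · exact absurd (hrange S x h'') (by omega)
          · have := mem_gset.mp h''
            omega
        · exact h'
      exact Finset.Subset.antisymm (key _ _ (le_of_eq h)) (key _ _ (le_of_eq h.symm))
    · intro T T'
      constructor
      · intro h
        exact Finset.union_subset_union_right (Finset.map_subset_map.mpr h)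
      · intro h
        rw [← Finset.map_subset_map (f := emb)]
        intro x hx
        have hxv := hmapval T x hx
        have := h (Finset.mem_union_right _ hx)
        rcases Finset.mem_union.mp this with h' | h'
        · rcases Finset.mem_union.mp h' with h'' | h''
          · exact absurd (hrange S x h'') (by omega)
          · have := mem_gset.mp h''
            omega
        · exact h'
    · intro T
      exact hred (T.map emb) (hsubX T)
  · -- blue copy
    left
    push_neg at hB
    simp only [Bool.not_eq_true] at hB
    have hB' : ∀ S : Finset (Fin n), a ≤ S.card → S.card ≤ n - b →
        ∃ T, T ⊆ xset N n' a m S.card ∧ c (i S ∪ gset N n' a m S.card ∪ T) = false := by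
      intro S h1' h2'
      exact hB S h1' h2'
    let TS : Finset (Fin n) → Finset (Fin N) := fun S =>
      if h : a ≤ S.card ∧ S.card ≤ n - b then (hB' S h.1 h.2).choose else ∅
    have hTS : ∀ S : Finset (Fin n), a ≤ S.card → S.card ≤ n - b →
        TS S ⊆ xset N n' a m S.card ∧
          c (i S ∪ gset N n' a m S.card ∪ TS S) = false := by
      intro S hA hBc
      have : TS S = (hB' S hA hBc).choose := by
        simp only [TS, dif_pos (And.intro hA hBc)]
      rw [this]
      exact (hB' S hA hBc).choose_spec
    set f := blueMap N n n' a b m i TS with hf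
    -- basic facts about f
    have hif : ∀ S, i S ⊆ f S := by
      intro S
      rw [hf]
      unfold blueMap
      split_ifs <;> first | rfl | exact Finset.subset_union_left
    have hrefl : ∀ S : Finset (Fin n), ∀ x : Fin N, x ∈ f S → (x : ℕ) < n' → x ∈ i S := by
      intro S x hx hxlt
      rw [hf] at hx
      unfold blueMap at hx
      split_ifs at hx with hc1 hc2
      · exact hx
      · rcases Finset.mem_union.mp hx with h' | h'
        · exact h'
        · rcases Finset.mem_union.mp h' with h'' | h''
          · have := mem_gset.mp h''
            omega
          · have := mem_xset.mp ((hTS S (by omega) hc2).1 h'')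
            have hnn : (S.card - a) * m + ((S.card - a) * m + m) = 2 * ((S.card - a) * m) + m := by ring
            omega
      · rcases Finset.mem_union.mp hx with h' | h'
        · exact h'
        · simp only [Finset.mem_filter] at h'
          omega
    have hmono : ∀ S T : Finset (Fin n), S ⊆ T → f S ⊆ f T := by
      intro S T hST
      have hcard : S.card ≤ T.card := Finset.card_le_card hST
      have hiST : i S ⊆ i T := (hord S T).mp hST
      rw [hf]
      unfold blueMap
      by_cases hS1 : S.card < a
      · rw [if_pos hS1]
        split_ifs with hT1 hT2
        · exact hiST
        · exact hiST.trans Finset.subset_union_left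
        · exact hiST.trans Finset.subset_union_left
      · rw [if_neg hS1]
        by_cases hS2 : S.card ≤ n - b
        · rw [if_pos hS2]
          have hT1 : ¬ T.card < a := by omega
          rw [if_neg hT1]
          by_cases hT2 : T.card ≤ n - b
          · rw [if_pos hT2]
            rcases eq_or_lt_of_le hcard with heq | hlt
            · have : S = T := Finset.eq_of_subset_of_card_le hST heq.ge
              subst this
              rfl
            · apply Finset.union_subset (hiST.trans Finset.subset_union_left)
              apply Finset.union_subset
              · intro x hx
                have hxg := mem_gset.mp hx
                refine Finset.mem_union_right _ (Finset.mem_union_left _ (mem_gset.mpr ?_))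
                have : (S.card - a) * m ≤ (T.card - a) * m :=
                  Nat.mul_le_mul_right m (by omega)
                omega
              · intro x hx
                have hxg := mem_xset.mp ((hTS S (by omega) hS2).1 hx)
                refine Finset.mem_union_right _ (Finset.mem_union_left _ (mem_gset.mpr ?_))
                have h' : (S.card - a + 1) * m ≤ (T.card - a) * m :=
                  Nat.mul_le_mul_right m (by omega)
                have hnn : (S.card - a + 1) * m = (S.card - a) * m + m := by ring
                omega
          · rw [if_neg hT2]
            apply Finset.union_subset (hiST.trans Finset.subset_union_left)
            apply Finset.union_subset
            · intro x hx
              have := mem_gset.mp hx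
              exact Finset.mem_union_right _ (by simp; omega)
            · intro x hx
              have hxg := mem_xset.mp ((hTS S (by omega) hS2).1 hx)
              exact Finset.mem_union_right _ (by simp; omega)
        · rw [if_neg hS2]
          have hT1 : ¬ T.card < a := by omega
          have hT2 : ¬ T.card ≤ n - b := by omega
          rw [if_neg hT1, if_neg hT2]
          exact Finset.union_subset (hiST.trans Finset.subset_union_left)
            Finset.subset_union_right
    have horder : ∀ S T : Finset (Fin n), S ⊆ T ↔ f S ⊆ f T := by
      intro S T
      constructor
      · exact hmono S T
      · intro h
        rw [hord]
        intro x hx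
        exact hrefl T x (h (hif S hx)) (hrange S x hx)
    refine ⟨f, ?_, horder, ?_⟩
    · intro S T h
      exact Finset.Subset.antisymm ((horder S T).mpr (le_of_eq h))
        ((horder T S).mpr (le_of_eq h.symm))
    · intro S
      rw [hf]
      unfold blueMap
      split_ifs with hc1 hc2
      · exact hbot S hc1
      · rw [← Finset.union_assoc]
        exact (hTS S (by omega) hc2).2
      · exact htop S (by omega)
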